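/- arXiv:math/0507410 — 3 statements merged into one kernel-verified Lean document; each statement's English description precedes it below -/
import Mathlib

section
/- For ν ∉ {1,−1,∞}, every 3-linear form U in the symmetry class generated by ξ_ν (i.e., with ξ_ν U = U) satisfies the identity −((ν²−ν+1)/(ν²−1))·U(x,y,z) + ((2ν−1)/(ν²−1))·U(x,z,y) + U(z,y,x) = 0 for all x,y,z. -/
open MonoidAlgebra

/-- The permutation `[1,3,2]`. -/
def p132 : Equiv.Perm (Fin 3) := Equiv.swap 1 2
/-- The permutation `[2,1,3]`. -/
def p213 : Equiv.Perm (Fin 3) := Equiv.swap 0 1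
/-- The permutation `[2,3,1]`, sending `1↦2, 2↦3, 3↦1`. -/
def p231 : Equiv.Perm (Fin 3) := Equiv.swap 0 2 * Equiv.swap 0 1
/-- The permutation `[3,1,2]`, sending `1↦3, 2↦1, 3↦2`. -/
def p312 : Equiv.Perm (Fin 3) := Equiv.swap 0 1 * Equiv.swap 0 2
/-- The permutation `[3,2,1]`. -/
def p321 : Equiv.Perm (Fin 3) := Equiv.swap 0 2

/-- `ξ_ν = (1/3)( e + ν·[1,3,2] + (1−ν)·[2,1,3] − ν·[2,3,1] + (ν−1)·[3,1,2] − [3,2,1] )`. -/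
noncomputable def xiNu (ν : ℝ) : MonoidAlgebra ℝ (Equiv.Perm (Fin 3)) :=
  single 1 (1 / 3) + single p132 (ν / 3) + single p213 ((1 - ν) / 3)
    + single p231 (-(ν / 3)) + single p312 ((ν - 1) / 3) + single p321 (-(1 / 3))

/-- The action `(aU)(v₁,v₂,v₃) = Σ_p a(p)·U(v_{p(1)},v_{p(2)},v_{p(3)})`. -/
noncomputable def act {V : Type*} [AddCommGroup V] [Module ℝ V]
    (a : MonoidAlgebra ℝ (Equiv.Perm (Fin 3)))
    (U : MultilinearMap ℝ (fun _ : Fin 3 => V) ℝ) (v : Fin 3 → V) : ℝ :=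
  a.coeff.sum fun p c => c * U (fun i => v (p i))

private lemma act_expand {V : Type*} [AddCommGroup V] [Module ℝ V] (ν : ℝ)
    (U : MultilinearMap ℝ (fun _ : Fin 3 => V) ℝ) (v : Fin 3 → V) :
    act (xiNu ν) U v = (1/3) * U v + (ν/3) * U (fun i => v (p132 i))
      + ((1-ν)/3) * U (fun i => v (p213 i)) + (-(ν/3)) * U (fun i => v (p231 i))
      + ((ν-1)/3) * U (fun i => v (p312 i)) + (-(1/3)) * U (fun i => v (p321 i)) := by
  unfold act xiNu
  simp only [coeff_add, coeff_single]
  rw [Finsupp.sum_add_index' (by simp) (by intros; ring),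
      Finsupp.sum_add_index' (by simp) (by intros; ring),
      Finsupp.sum_add_index' (by simp) (by intros; ring),
      Finsupp.sum_add_index' (by simp) (by intros; ring),
      Finsupp.sum_add_index' (by simp) (by intros; ring)]
  rw [Finsupp.sum_single_index (by simp), Finsupp.sum_single_index (by simp),
      Finsupp.sum_single_index (by simp), Finsupp.sum_single_index (by simp),
      Finsupp.sum_single_index (by simp), Finsupp.sum_single_index (by simp)]
  simp

private lemma c132 {V : Type*} (a b c : V) :
    (fun i => ![a,b,c] (p132 i)) = ![a,c,b] := by
  funext i; fin_cases i <;> simp [p132, Equiv.swap_apply_def]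

private lemma c213 {V : Type*} (a b c : V) :
    (fun i => ![a,b,c] (p213 i)) = ![b,a,c] := by
  funext i; fin_cases i <;> simp [p213, Equiv.swap_apply_def]

private lemma c231 {V : Type*} (a b c : V) :
    (fun i => ![a,b,c] (p231 i)) = ![b,c,a] := by
  funext i; fin_cases i <;> simp [p231, Equiv.swap_apply_def]

private lemma c312 {V : Type*} (a b c : V) :
    (fun i => ![a,b,c] (p312 i)) = ![c,a,b] := by
  funext i; fin_cases i <;> simp [p312, Equiv.swap_apply_def]

private lemma c321 {V : Type*} (a b c : V) :
    (fun i => ![a,b,c] (p321 i)) = ![c,b,a] := by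
  funext i; fin_cases i <;> simp [p321, Equiv.swap_apply_def]

/-- For `ν ∉ {1,−1,∞}`, every trilinear form `U` in the symmetry class generated by
`ξ_ν` (i.e. with `ξ_ν U = U`) satisfies
`−((ν²−ν+1)/(ν²−1))·U(x,y,z) + ((2ν−1)/(ν²−1))·U(x,z,y) + U(z,y,x) = 0`. -/
theorem symmetry_class_linear_identity
    {V : Type*} [AddCommGroup V] [Module ℝ V] [FiniteDimensional ℝ V]
    (ν : ℝ) (hν₁ : ν ≠ 1) (hν₂ : ν ≠ -1)
    (U : MultilinearMap ℝ (fun _ : Fin 3 => V) ℝ)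
    (hU : ∀ v, act (xiNu ν) U v = U v) :
    ∀ x y z : V,
      -((ν ^ 2 - ν + 1) / (ν ^ 2 - 1)) * U ![x, y, z]
        + ((2 * ν - 1) / (ν ^ 2 - 1)) * U ![x, z, y] + U ![z, y, x] = 0 := by
  intro x y z
  have h1 := hU ![x, y, z]
  have h2 := hU ![x, z, y]
  have h4 := hU ![y, z, x]
  rw [act_expand, c132, c213, c231, c312, c321] at h1 h2 h4
  have hd : ν ^ 2 - 1 ≠ 0 := by
    intro h
    rcases mul_eq_zero.mp (by linarith [sq_nonneg ν] : (ν - 1) * (ν + 1) = 0) with h' | h'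
    · exact hν₁ (by linarith)
    · exact hν₂ (by linarith)
  have T' : -(ν^2 - ν + 1) * U ![x, y, z] + (2*ν - 1) * U ![x, z, y]
      + (ν^2 - 1) * U ![z, y, x] = 0 := by
    linear_combination (2 - ν) * h1 + (2 - 2*ν - ν^2) * h2 + (ν^2 - 1) * h4
  field_simp
  linear_combination T'
end

section
/- In ℚ[S₅], the element σ_{ν,ε} := y_{t'}* · ξ'_ν · ζ''_ε is nonzero if and only if ν ≠ 1/2 (for each fixed ε ∈ {1,−1}), where y_{t'} is the Young symmetrizer of the standard tableau of shape (3,2) with rows (1,3,5),(2,4), ξ'_ν is the image of ξ_ν under the embedding S₃ ↪ S₅ fixing 4 and 5, and ζ''_ε := e + ε·(4 5). -/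
open MonoidAlgebra

/-- Horizontal permutations of the tableau `t'` with rows `{1,3,5}`, `{2,4}` (0-indexed
`{0,2,4}`, `{1,3}`). -/
def isHoriz' (p : Equiv.Perm (Fin 5)) : Prop :=
  (∀ i ∈ ({0, 2, 4} : Finset (Fin 5)), p i ∈ ({0, 2, 4} : Finset (Fin 5))) ∧
  (∀ i ∈ ({1, 3} : Finset (Fin 5)), p i ∈ ({1, 3} : Finset (Fin 5)))

/-- Vertical permutations of `t'`: preserving the columns `{1,2}`, `{3,4}`, `{5}`
(0-indexed `{0,1}`, `{2,3}`, `{4}`). -/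
def isVert' (q : Equiv.Perm (Fin 5)) : Prop :=
  (∀ i ∈ ({0, 1} : Finset (Fin 5)), q i ∈ ({0, 1} : Finset (Fin 5))) ∧
  (∀ i ∈ ({2, 3} : Finset (Fin 5)), q i ∈ ({2, 3} : Finset (Fin 5))) ∧
  q 4 = 4

instance : DecidablePred isHoriz' := fun p => by unfold isHoriz'; infer_instance
instance : DecidablePred isVert' := fun q => by unfold isVert'; infer_instance

/-- `y_{t'}* = Σ_{p∈H_{t'}} Σ_{q∈V_{t'}} sign(q)·(p∘q)⁻¹ ∈ ℚ[S₅]`. -/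
noncomputable def ytStar' : MonoidAlgebra ℚ (Equiv.Perm (Fin 5)) :=
  ∑ p ∈ Finset.univ.filter isHoriz', ∑ q ∈ Finset.univ.filter isVert',
    single (p * q)⁻¹ ((Equiv.Perm.sign q : ℤ) : ℚ)

/-- `[1,3,2]` embedded in `S₅` (fixing 4 and 5). -/
def q132 : Equiv.Perm (Fin 5) := Equiv.swap 1 2
/-- `[2,1,3]` embedded in `S₅`. -/
def q213 : Equiv.Perm (Fin 5) := Equiv.swap 0 1
/-- `[2,3,1]` embedded in `S₅`. -/
def q231 : Equiv.Perm (Fin 5) := Equiv.swap 0 2 * Equiv.swap 0 1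
/-- `[3,1,2]` embedded in `S₅`. -/
def q312 : Equiv.Perm (Fin 5) := Equiv.swap 0 1 * Equiv.swap 0 2
/-- `[3,2,1]` embedded in `S₅`. -/
def q321 : Equiv.Perm (Fin 5) := Equiv.swap 0 2

/-- `ξ'_ν ∈ ℚ[S₅]`: the image of
`ξ_ν = (1/3)(e + ν[1,3,2] + (1−ν)[2,1,3] − ν[2,3,1] + (ν−1)[3,1,2] − [3,2,1]) ∈ ℚ[S₃]`
under the embedding `S₃ ↪ S₅` fixing 4 and 5. -/
noncomputable def xiNu' (ν : ℚ) : MonoidAlgebra ℚ (Equiv.Perm (Fin 5)) :=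
  single 1 (1 / 3) + single q132 (ν / 3) + single q213 ((1 - ν) / 3)
    + single q231 (-(ν / 3)) + single q312 ((ν - 1) / 3) + single q321 (-(1 / 3))

/-- `ζ''_ε = e + ε·(4 5) ∈ ℚ[S₅]` (0-indexed: the transposition of 3 and 4). -/
noncomputable def zeta (ε : ℚ) : MonoidAlgebra ℚ (Equiv.Perm (Fin 5)) :=
  single 1 1 + single (Equiv.swap 3 4) ε

/-- `σ_{ν,ε} := y_{t'}* · ξ'_ν · ζ''_ε ∈ ℚ[S₅]`. -/
noncomputable def sigma (ν ε : ℚ) : MonoidAlgebra ℚ (Equiv.Perm (Fin 5)) :=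
  ytStar' * xiNu' ν * zeta ε

abbrev P5 := Equiv.Perm (Fin 5)
def s01 : P5 := Equiv.swap 0 1
def s13 : P5 := Equiv.swap 1 3
def s23 : P5 := Equiv.swap 2 3
def s02 : P5 := Equiv.swap 0 2
def s04 : P5 := Equiv.swap 0 4
def s24 : P5 := Equiv.swap 2 4

lemma hV5 : Finset.univ.filter isVert' = ({1, s01, s23, s01*s23} : Finset P5) := by decide
lemma hH5 : Finset.univ.filter isHoriz' =
    ({1, s24, s13, s24*s13, s02, s04*s02, s02*s13, s04*s02*s13, s02*s04, s04,
      s02*s04*s13, s04*s13} : Finset P5) := by decide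

noncomputable def Aelt : MonoidAlgebra ℚ P5 := ∑ p ∈ Finset.univ.filter isHoriz', single p⁻¹ (1:ℚ)
noncomputable def Belt : MonoidAlgebra ℚ P5 :=
  ∑ q ∈ Finset.univ.filter isVert', single q⁻¹ ((Equiv.Perm.sign q : ℤ) : ℚ)
noncomputable def wder : MonoidAlgebra ℚ P5 :=
  single q132 (1/3) + single q213 (-(1/3)) + single q231 (-(1/3)) + single q312 (1/3)
noncomputable def atom (a : P5) : MonoidAlgebra ℚ P5 := single a 1

lemma sm (a : P5) (c : ℚ) : single a c = c • atom a := by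
  rw [atom, MonoidAlgebra.smul_single, smul_eq_mul, mul_one]

lemma hfact : ytStar' = Belt * Aelt := by
  rw [ytStar', Belt, Aelt, Finset.sum_mul_sum]
  rw [Finset.sum_comm]
  simp [single_mul_single, ← mul_inv_rev]

lemma hlin (ν : ℚ) : xiNu' ν = xiNu' (1/2) + (ν - 1/2) • wder := by
  unfold xiNu' wder
  simp only [sm]
  module

lemma hclose1 : ∀ x : Fin 5, x ∈ ({0,2,4} : Finset (Fin 5)) → q321 x ∈ ({0,2,4} : Finset (Fin 5)) := by decide
lemma hclose2 : ∀ x : Fin 5, x ∈ ({1,3} : Finset (Fin 5)) → q321 x ∈ ({1,3} : Finset (Fin 5)) := by decide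

lemma hAq : Aelt * single q321 (1:ℚ) = Aelt := by
  rw [Aelt, Finset.sum_mul]
  simp only [single_mul_single, mul_one]
  refine Finset.sum_nbij' (i := fun p => q321 * p) (j := fun p => q321 * p) ?_ ?_ ?_ ?_ ?_
  · intro p hp
    simp only [Finset.mem_filter, Finset.mem_univ, true_and] at hp ⊢
    exact ⟨fun i hi => hclose1 _ (hp.1 i hi), fun i hi => hclose2 _ (hp.2 i hi)⟩
  · intro p hp
    simp only [Finset.mem_filter, Finset.mem_univ, true_and] at hp ⊢
    exact ⟨fun i hi => hclose1 _ (hp.1 i hi), fun i hi => hclose2 _ (hp.2 i hi)⟩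
  · intro p _; show q321 * (q321 * p) = p
    rw [← mul_assoc, show q321 * q321 = 1 from by decide, one_mul]
  · intro p _; show q321 * (q321 * p) = p
    rw [← mul_assoc, show q321 * q321 = 1 from by decide, one_mul]
  · intro p _
    rw [mul_inv_rev, show q321⁻¹ = q321 from by decide]

lemma hxih : single q321 (1:ℚ) * xiNu' (1/2) = - xiNu' (1/2) := by
  unfold xiNu'
  simp only [mul_add, single_mul_single, one_mul, mul_one,
    show q321 * q132 = q312 from by decide, show q321 * q213 = q231 from by decide,
    show q321 * q231 = q213 from by decide, show q321 * q312 = q132 from by decide,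
    show q321 * q321 = 1 from by decide]
  simp only [sm]
  module

lemma hzero : ytStar' * xiNu' (1/2) = 0 := by
  have h1 : Aelt * xiNu' (1/2) = - (Aelt * xiNu' (1/2)) := by
    conv_lhs => rw [← hAq, mul_assoc, hxih, mul_neg]
  have h2 : Aelt * xiNu' (1/2) + Aelt * xiNu' (1/2) = 0 := by
    nth_rewrite 2 [h1]
    exact add_neg_cancel _
  have h3 : (2:ℚ) • (Aelt * xiNu' (1/2)) = 0 := by rw [two_smul]; exact h2
  have hx : Aelt * xiNu' (1/2) = 0 :=
    (smul_eq_zero.mp h3).resolve_left (by norm_num)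
  rw [hfact, mul_assoc, hx, mul_zero]

lemma huval (eps : ℚ) (x : P5) : (wder * zeta eps).coeff x =
    (if q132 = x then 1/3 else 0) + (if q132 * Equiv.swap 3 4 = x then eps/3 else 0)
    + (if q213 = x then -(1/3) else 0) + (if q213 * Equiv.swap 3 4 = x then -(eps/3) else 0)
    + (if q231 = x then -(1/3) else 0) + (if q231 * Equiv.swap 3 4 = x then -(eps/3) else 0)
    + (if q312 = x then 1/3 else 0) + (if q312 * Equiv.swap 3 4 = x then eps/3 else 0) := by
  rw [wder, zeta]
  simp only [mul_add, add_mul, single_mul_single, mul_one, one_mul]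
  repeat rw [MonoidAlgebra.coeff_add]
  repeat rw [Finsupp.add_apply]
  repeat rw [MonoidAlgebra.coeff_single_apply]
  ring_nf

lemma hsgn1 : ((Equiv.Perm.sign (1 : P5) : ℤ) : ℚ) = 1 := by simp
lemma hsgn2 : ((Equiv.Perm.sign s01 : ℤ) : ℚ) = -1 := by
  rw [s01, Equiv.Perm.sign_swap (by decide)]; norm_num
lemma hsgn3 : ((Equiv.Perm.sign s23 : ℤ) : ℚ) = -1 := by
  rw [s23, Equiv.Perm.sign_swap (by decide)]; norm_num
lemma hsgn4 : ((Equiv.Perm.sign (s01*s23) : ℤ) : ℚ) = 1 := by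
  rw [map_mul, s01, s23, Equiv.Perm.sign_swap (by decide), Equiv.Perm.sign_swap (by decide)]
  norm_num

set_option maxRecDepth 40000 in
lemma hwit (eps : ℚ) : (ytStar' * (wder * zeta eps)).coeff q132 = 4/3 := by
  rw [ytStar', hH5, hV5]
  simp only [Finset.sum_mul]
  repeat rw [Finset.sum_insert (by decide)]
  simp only [Finset.sum_singleton]
  repeat rw [MonoidAlgebra.coeff_add]
  repeat rw [Finsupp.add_apply]
  repeat rw [MonoidAlgebra.coeff_sum]
  repeat rw [Finset.sum_apply']
  repeat rw [Finset.sum_insert (by decide)]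
  simp only [Finset.sum_singleton]
  simp only [MonoidAlgebra.coeff_single_mul_apply, inv_inv, huval, hsgn1, hsgn2, hsgn3, hsgn4,
    one_mul, mul_one]
  simp (config := { decide := true }) only []
  norm_num


/-- For each `ε ∈ {1,−1}`, the element `σ_{ν,ε} = y_{t'}* · ξ'_ν · ζ''_ε ∈ ℚ[S₅]` is
nonzero if and only if `ν ≠ 1/2`. -/
theorem sigma_ne_zero_iff (ν ε : ℚ) (hε : ε = 1 ∨ ε = -1) :
    sigma ν ε ≠ 0 ↔ ν ≠ 1 / 2 := by
  have hdecomp : sigma ν ε = (ν - 1/2) • (ytStar' * (wder * zeta ε)) := by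
    unfold sigma
    rw [hlin ν, mul_add, hzero, zero_add, mul_smul_comm, smul_mul_assoc, mul_assoc]
  constructor
  · intro h hν
    exact h (by rw [hdecomp, hν]; simp)
  · intro hν hs
    have h0 : (sigma ν ε).coeff q132 = 0 := by rw [hs]; rfl
    rw [hdecomp, MonoidAlgebra.coeff_smul_apply, hwit ε, smul_eq_mul] at h0
    apply hν
    have h4 : ν - 1/2 = 0 := by
      rcases mul_eq_zero.mp h0 with h | h
      · exact h
      · norm_num at h
    linarith
end

section
/- For ν = 1/2, the element σ_{1/2,ε} = y_{t'}* · ξ'_{1/2} · ζ''_ε equals 0 in ℚ[S₅], for both ε = 1 and ε = −1. -/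
open MonoidAlgebra

def H12 : Finset (Equiv.Perm (Fin 5)) :=
  {1, Equiv.swap 1 3, Equiv.swap 0 2, Equiv.swap 0 2 * Equiv.swap 1 3,
   Equiv.swap 0 4, Equiv.swap 0 4 * Equiv.swap 1 3, Equiv.swap 2 4,
   Equiv.swap 2 4 * Equiv.swap 1 3, Equiv.swap 0 2 * Equiv.swap 2 4,
   Equiv.swap 0 2 * Equiv.swap 2 4 * Equiv.swap 1 3, Equiv.swap 2 4 * Equiv.swap 0 2,
   Equiv.swap 2 4 * Equiv.swap 0 2 * Equiv.swap 1 3}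

def V4 : Finset (Equiv.Perm (Fin 5)) :=
  {1, Equiv.swap 0 1, Equiv.swap 2 3, Equiv.swap 0 1 * Equiv.swap 2 3}

set_option maxHeartbeats 1000000 in
lemma hH : Finset.univ.filter isHoriz' = H12 := by decide

set_option maxHeartbeats 1000000 in
lemma hV : Finset.univ.filter isVert' = V4 := by decide

def cfV (h : Equiv.Perm (Fin 5)) : ℤ :=
  if h 3 = 3 then (if h 4 = 4 then
    (match h 0, h 1 with
     | 0,1 => 2 | 0,2 => 1 | 1,0 => 1 | 1,2 => -1 | 2,0 => -1 | 2,1 => -2 | _,_ => 0) else 0) else 0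

def cfE (h : Equiv.Perm (Fin 5)) : ℤ :=
  (if (1 : Equiv.Perm (Fin 5)) = h then 2 else 0) + (if q132 = h then 1 else 0)
  + (if q213 = h then 1 else 0) + (if q231 = h then -1 else 0)
  + (if q312 = h then -1 else 0) + (if q321 = h then -2 else 0)

def vsign (q : Equiv.Perm (Fin 5)) : ℤ :=
  (if q 0 = 0 then 1 else -1) * (if q 2 = 2 then 1 else -1)

lemma addApp (f g : MonoidAlgebra ℚ (Equiv.Perm (Fin 5))) (x : Equiv.Perm (Fin 5)) :
    (f + g).coeff x = f.coeff x + g.coeff x := Finsupp.add_apply f.coeff g.coeff x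

lemma sumApp {ι : Type*} (S : Finset ι) (f : ι → MonoidAlgebra ℚ (Equiv.Perm (Fin 5)))
    (x : Equiv.Perm (Fin 5)) : (∑ i ∈ S, f i).coeff x = ∑ i ∈ S, (f i).coeff x := by
  rw [MonoidAlgebra.coeff_sum, Finsupp.finset_sum_apply]

set_option maxHeartbeats 1000000 in
set_option maxRecDepth 40000 in
lemma cfEV : ∀ h : Equiv.Perm (Fin 5), cfE h = cfV h := by decide

set_option maxRecDepth 40000 in
lemma hsign : ∀ q ∈ V4, (Equiv.Perm.sign q : ℤ) = vsign q := by decide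

lemma xiApp (x : Equiv.Perm (Fin 5)) : (xiNu' (1/2)).coeff x = ((cfE x : ℤ) : ℚ) / 6 := by
  simp only [xiNu', cfE, addApp, MonoidAlgebra.coeff_single, Finsupp.single_apply]
  split_ifs <;> norm_num

set_option maxHeartbeats 8000000 in
set_option maxRecDepth 40000 in
lemma key1 : ∀ g : Equiv.Perm (Fin 5), (∑ p ∈ H12, ∑ q ∈ V4,
    vsign q * (cfV (p * q * g) + 1 * cfV (p * q * g * Equiv.swap 3 4))) = 0 := by decide

set_option maxHeartbeats 8000000 in
set_option maxRecDepth 40000 in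
lemma key2 : ∀ g : Equiv.Perm (Fin 5), (∑ p ∈ H12, ∑ q ∈ V4,
    vsign q * (cfV (p * q * g) + (-1) * cfV (p * q * g * Equiv.swap 3 4))) = 0 := by decide

lemma sigma_eq_zero_of (ε : ℚ) (εz : ℤ) (hε : ((εz : ℤ) : ℚ) = ε)
    (key : ∀ g : Equiv.Perm (Fin 5), (∑ p ∈ H12, ∑ q ∈ V4,
      vsign q * (cfV (p * q * g) + εz * cfV (p * q * g * Equiv.swap 3 4))) = 0) :
    sigma (1/2) ε = 0 := by
  refine MonoidAlgebra.ext (Finsupp.ext fun g => ?_)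
  have hB : ∀ x : Equiv.Perm (Fin 5),
      (xiNu' (1/2) * zeta ε).coeff x = ((cfE x : ℤ) : ℚ) / 6 + ((cfE (x * Equiv.swap 3 4) : ℤ) : ℚ) / 6 * ε := by
    intro x
    rw [zeta, mul_add, addApp, MonoidAlgebra.coeff_mul_single_one,
      MonoidAlgebra.coeff_mul_single_apply, Equiv.swap_inv, xiApp, xiApp]
    ring
  calc (sigma (1/2) ε).coeff g
      = ∑ p ∈ H12, ∑ q ∈ V4,
          ((Equiv.Perm.sign q : ℤ) : ℚ) * ((xiNu' (1/2) * zeta ε).coeff (p * q * g)) := by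
        rw [sigma, mul_assoc, ytStar', hH, hV, Finset.sum_mul, sumApp]
        refine Finset.sum_congr rfl fun p hp => ?_
        rw [Finset.sum_mul, sumApp]
        refine Finset.sum_congr rfl fun q hq => ?_
        rw [MonoidAlgebra.coeff_single_mul_apply, inv_inv, mul_assoc]
    _ = ∑ p ∈ H12, ∑ q ∈ V4,
          (((vsign q * (cfV (p * q * g) + εz * cfV (p * q * g * Equiv.swap 3 4)) : ℤ) : ℚ) / 6) := by
        refine Finset.sum_congr rfl fun p hp => Finset.sum_congr rfl fun q hq => ?_
        rw [hB, hsign q hq, cfEV, cfEV, ← hε, mul_assoc]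
        push_cast
        ring
    _ = ((∑ p ∈ H12, ∑ q ∈ V4,
          vsign q * (cfV (p * q * g) + εz * cfV (p * q * g * Equiv.swap 3 4)) : ℤ) : ℚ) / 6 := by
        push_cast
        rw [Finset.sum_div]
        refine Finset.sum_congr rfl fun p hp => ?_
        rw [Finset.sum_div]
    _ = 0 := by rw [key g]; norm_num

/-- For `ν = 1/2`, the element `σ_{1/2,ε} = y_{t'}* · ξ'_{1/2} · ζ''_ε` vanishes in
`ℚ[S₅]`, for both `ε = 1` and `ε = −1`. -/
theorem sigma_half_eq_zero : sigma (1 / 2) 1 = 0 ∧ sigma (1 / 2) (-1) = 0 := by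
  exact ⟨sigma_eq_zero_of 1 1 (by norm_num) key1, sigma_eq_zero_of (-1) (-1) (by norm_num) key2⟩
end
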